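/- Let n ≥ 1 and let E be a Banach lattice such that the space P^r(^nE) of regular real-valued n-homogeneous polynomials on E, equipped with the regular norm ‖·‖_r, has order continuous norm. If E fails the positive Grothendieck property, then (P^r(^nE), ‖·‖_r) is a KB-space: every increasing ‖·‖_r-bounded sequence of positive regular polynomials is ‖·‖_r-convergent. -/

import Mathlib

open Filter Topology Metric

section Defs

variable {E F : Type*} [NormedAddCommGroup E] [Lattice E] [HasSolidNorm E]
  [IsOrderedAddMonoid E] [NormedSpace ℝ E]
  [NormedAddCommGroup F] [Lattice F] [HasSolidNorm F] [IsOrderedAddMonoid F] [NormedSpace ℝ F]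

/-- `P : E → F` is a continuous `n`-homogeneous polynomial: `P x = T(x,…,x)` for a
symmetric continuous `n`-linear map `T`. -/
def IsHomogPoly (n : ℕ) (P : E → F) : Prop :=
  ∃ T : ContinuousMultilinearMap ℝ (fun _ : Fin n => E) F,
    (∀ (v : Fin n → E) (σ : Equiv.Perm (Fin n)), T (v ∘ σ) = T v) ∧
    ∀ x : E, P x = T (fun _ => x)

/-- `P` is a positive `n`-homogeneous polynomial: its (symmetric) generating multilinear
map takes nonnegative values on nonnegative arguments. -/
def IsPosPoly (n : ℕ) (P : E → F) : Prop :=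
  ∃ T : ContinuousMultilinearMap ℝ (fun _ : Fin n => E) F,
    (∀ (v : Fin n → E) (σ : Equiv.Perm (Fin n)), T (v ∘ σ) = T v) ∧
    (∀ v : Fin n → E, (∀ i, 0 ≤ v i) → 0 ≤ T v) ∧
    ∀ x : E, P x = T (fun _ => x)

/-- `P` is regular: a difference of two positive `n`-homogeneous polynomials. -/
def IsRegPoly (n : ℕ) (P : E → F) : Prop :=
  ∃ P₁ P₂ : E → F, IsPosPoly n P₁ ∧ IsPosPoly n P₂ ∧ P = P₁ - P₂

/-- The sup norm `‖P‖ = sup {‖P x‖ : ‖x‖ ≤ 1}`. -/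
noncomputable def polySupNorm (P : E → F) : ℝ :=
  sSup {r : ℝ | ∃ x : E, ‖x‖ ≤ 1 ∧ r = ‖P x‖}

/-- The regular norm `‖P‖_r = inf {‖Q‖ : Q positive, Q - P and Q + P positive}`. -/
noncomputable def polyRegNorm (n : ℕ) (P : E → F) : ℝ :=
  sInf {r : ℝ | ∃ Q : E → F, IsPosPoly n Q ∧ IsPosPoly n (Q - P) ∧
    IsPosPoly n (Q + P) ∧ r = polySupNorm Q}

/-- Dedekind completeness: every nonempty subset bounded above has a least upper bound. -/
def DedekindComplete (G : Type*) [Preorder G] : Prop :=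
  ∀ S : Set G, S.Nonempty → BddAbove S → ∃ b, IsLUB S b

end Defs

section Aux

open Finset

lemma polar_aux {n : ℕ} {E : Type*} [AddCommGroup E] [Module ℝ E]
    (T : MultilinearMap ℝ (fun _ : Fin n => E) ℝ)
    (hsym : ∀ (v : Fin n → E) (σ : Equiv.Perm (Fin n)), T (v ∘ σ) = T v)
    (h0 : ∀ x : E, T (fun _ => x) = 0) (v : Fin n → E) : T v = 0 := by
  classical
  have expand : ∀ S : Finset (Fin n),
      T (fun _ => ∑ j ∈ S, v j)
        = ∑ r ∈ Fintype.piFinset (fun _ : Fin n => S), T (fun i => v (r i)) :=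
    fun S => T.map_sum_finset (fun _ j => v j) (fun _ => S)
  have powsum : ∀ B : Finset (Fin n),
      (∑ A ∈ B.powerset, (-1:ℝ)^(B.card - A.card)) = if B = ∅ then 1 else 0 := by
    intro B
    have reind : (∑ A ∈ B.powerset, (-1:ℝ)^(B.card - A.card))
        = ∑ A ∈ B.powerset, (-1:ℝ)^(A.card) := by
      refine Finset.sum_nbij' (fun A => B \ A) (fun A => B \ A) ?_ ?_ ?_ ?_ ?_
      · intro A _; exact mem_powerset.2 sdiff_subset
      · intro A _; exact mem_powerset.2 sdiff_subset
      · intro A hA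
        show B \ (B \ A) = A
        rw [sdiff_sdiff_right_self]; exact inf_eq_right.2 (mem_powerset.1 hA)
      · intro A hA
        show B \ (B \ A) = A
        rw [sdiff_sdiff_right_self]; exact inf_eq_right.2 (mem_powerset.1 hA)
      · intro A hA; rw [card_sdiff_of_subset (mem_powerset.1 hA)]
    rw [reind]
    have h1 := @Finset.sum_powerset_neg_one_pow_card (Fin n) _ B
    have h2 : (∑ A ∈ B.powerset, (-1:ℝ)^(A.card))
        = ((∑ A ∈ B.powerset, (-1:ℤ)^(A.card) : ℤ) : ℝ) := by push_cast; rfl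
    rw [h2, h1]; split <;> simp
  have key : (0:ℝ) = ∑ r ∈ (univ : Finset (Fin n → Fin n)),
      T (fun i => v (r i)) * (if image r univ = univ then (1:ℝ) else 0) := by
    calc (0:ℝ) = ∑ S ∈ (univ : Finset (Fin n)).powerset,
          (-1:ℝ)^(n - S.card) * T (fun _ => ∑ j ∈ S, v j) := by simp [h0]
    _ = ∑ S ∈ (univ : Finset (Fin n)).powerset,
          ∑ r ∈ (univ : Finset (Fin n → Fin n)),
            (if (∀ i, r i ∈ S) then (-1:ℝ)^(n - S.card) * T (fun i => v (r i)) else 0) := by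
        refine sum_congr rfl fun S _ => ?_
        rw [expand S, mul_sum, ← Finset.sum_filter]
        congr 1
        ext r
        simp [Fintype.mem_piFinset]
    _ = ∑ r ∈ (univ : Finset (Fin n → Fin n)),
          ∑ S ∈ (univ : Finset (Fin n)).powerset,
            (if (∀ i, r i ∈ S) then (-1:ℝ)^(n - S.card) * T (fun i => v (r i)) else 0) :=
        Finset.sum_comm
    _ = ∑ r ∈ (univ : Finset (Fin n → Fin n)),
          T (fun i => v (r i)) * ∑ S ∈ (univ : Finset (Fin n)).powerset,
            (if image r univ ⊆ S then (-1:ℝ)^(n - S.card) else 0) := by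
        refine sum_congr rfl fun r _ => ?_
        rw [mul_sum]
        refine sum_congr rfl fun S _ => ?_
        have hiff : (∀ i, r i ∈ S) ↔ image r univ ⊆ S := by
          constructor
          · intro h y hy; obtain ⟨x, -, rfl⟩ := mem_image.1 hy; exact h x
          · intro h i; exact h (mem_image.2 ⟨i, mem_univ i, rfl⟩)
        rw [mul_ite, mul_zero, if_congr hiff (mul_comm _ _) rfl]
    _ = ∑ r ∈ (univ : Finset (Fin n → Fin n)),
          T (fun i => v (r i)) * (if image r univ = univ then (1:ℝ) else 0) := by
        refine sum_congr rfl fun r _ => ?_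
        congr 1
        set F := image r univ with hF
        calc (∑ S ∈ (univ : Finset (Fin n)).powerset,
              (if F ⊆ S then (-1:ℝ)^(n - S.card) else 0))
            = ∑ S ∈ ((univ : Finset (Fin n)).powerset).filter (fun S => F ⊆ S),
                (-1:ℝ)^(n - S.card) := (Finset.sum_filter _ _).symm
          _ = ∑ A ∈ Fᶜ.powerset, (-1:ℝ)^(Fᶜ.card - A.card) := by
              refine Finset.sum_nbij' (fun S => S \ F) (fun A => F ∪ A) ?_ ?_ ?_ ?_ ?_
              · intro S _
                refine mem_powerset.2 fun x hx => ?_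
                rw [Finset.mem_sdiff] at hx; simpa [Finset.mem_compl] using hx.2
              · intro A _
                exact mem_filter.2 ⟨mem_powerset.2 (subset_univ _), subset_union_left⟩
              · intro S hS
                have h1 : F ⊆ S := (mem_filter.1 hS).2
                exact union_sdiff_of_subset h1
              · intro A hA
                have hd : Disjoint F A := by
                  rw [disjoint_left]
                  intro x hxF hxA
                  have := mem_powerset.1 hA hxA
                  simp [Finset.mem_compl, hxF] at this
                exact union_sdiff_cancel_left hd
              · intro S hS
                have h1 : F ⊆ S := (mem_filter.1 hS).2
                have h2 : S.card ≤ n := by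
                  simpa using card_le_card (subset_univ S)
                have h3 : F.card ≤ S.card := card_le_card h1
                rw [card_sdiff_of_subset h1, Finset.card_compl, Fintype.card_fin]
                congr 1
                omega
          _ = if F = univ then 1 else 0 := by
              rw [powsum, if_congr (Finset.compl_eq_empty_iff F) rfl rfl]
  have filt : (univ : Finset (Fin n → Fin n)).filter (fun r => image r univ = univ)
      = (univ : Finset (Equiv.Perm (Fin n))).image
          (fun σ : Equiv.Perm (Fin n) => (σ : Fin n → Fin n)) := by
    ext r
    rw [mem_filter, mem_image]
    constructor
    · rintro ⟨-, h⟩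
      have hsurj : Function.Surjective r := by
        intro y
        have hy : y ∈ image r univ := by rw [h]; exact mem_univ y
        obtain ⟨x, -, rfl⟩ := mem_image.1 hy
        exact ⟨x, rfl⟩
      have hbij : Function.Bijective r :=
        (Fintype.bijective_iff_surjective_and_card r).2 ⟨hsurj, rfl⟩
      exact ⟨Equiv.ofBijective r hbij, mem_univ _, rfl⟩
    · rintro ⟨σ, -, rfl⟩
      refine ⟨mem_univ _, Finset.eq_univ_of_forall fun y => ?_⟩
      exact mem_image.2 ⟨σ.symm y, mem_univ _, σ.apply_symm_apply y⟩
  have key2 : (0:ℝ) = (Nat.factorial n : ℝ) * T v := by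
    rw [key, Finset.sum_congr rfl (fun r _ => by rw [mul_ite, mul_one, mul_zero]),
      ← Finset.sum_filter, filt,
      Finset.sum_image (fun a _ b _ h => Equiv.coe_fn_injective h)]
    have hc : ∀ σ ∈ (univ : Finset (Equiv.Perm (Fin n))),
        T (fun i => v (σ i)) = T v := fun σ _ => hsym v σ
    rw [Finset.sum_congr rfl hc, Finset.sum_const, card_univ, Fintype.card_perm,
      Fintype.card_fin, nsmul_eq_mul]
  have hne : (Nat.factorial n : ℝ) ≠ 0 := by positivity
  rcases mul_eq_zero.1 key2.symm with h | h
  · exact absurd h hne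
  · exact h

variable {E : Type*} [NormedAddCommGroup E] [Lattice E] [HasSolidNorm E]
  [IsOrderedAddMonoid E] [NormedSpace ℝ E] {n : ℕ}

lemma symm_diag_eq {S₁ S₂ : ContinuousMultilinearMap ℝ (fun _ : Fin n => E) ℝ}
    (h₁ : ∀ (v : Fin n → E) (σ : Equiv.Perm (Fin n)), S₁ (v ∘ σ) = S₁ v)
    (h₂ : ∀ (v : Fin n → E) (σ : Equiv.Perm (Fin n)), S₂ (v ∘ σ) = S₂ v)
    (hd : ∀ x : E, S₁ (fun _ => x) = S₂ (fun _ => x)) (v : Fin n → E) : S₁ v = S₂ v := by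
  have h := polar_aux (S₁.toMultilinearMap - S₂.toMultilinearMap)
    (fun v σ => by simp [h₁ v σ, h₂ v σ]) (fun x => by simp [hd x]) v
  simp only [MultilinearMap.sub_apply, ContinuousMultilinearMap.coe_coe, sub_eq_zero] at h
  exact h

lemma isPosPoly_zero : IsPosPoly n (0 : E → ℝ) :=
  ⟨0, fun _ _ => rfl, fun _ _ => le_refl 0, fun _ => rfl⟩

lemma IsPosPoly.congr {P Q : E → ℝ} (h : IsPosPoly n P) (e : ∀ x, P x = Q x) :
    IsPosPoly n Q := by
  obtain ⟨T, h1, h2, h3⟩ := h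
  exact ⟨T, h1, h2, fun x => (e x).symm.trans (h3 x)⟩

lemma IsPosPoly.add {P Q : E → ℝ} (hP : IsPosPoly n P) (hQ : IsPosPoly n Q) :
    IsPosPoly n (P + Q) := by
  obtain ⟨T, hT1, hT2, hT3⟩ := hP
  obtain ⟨U, hU1, hU2, hU3⟩ := hQ
  refine ⟨T + U, fun v σ => ?_, fun v hv => ?_, fun x => ?_⟩
  · simp only [ContinuousMultilinearMap.add_apply, hT1 v σ, hU1 v σ]
  · simpa only [ContinuousMultilinearMap.add_apply] using add_nonneg (hT2 v hv) (hU2 v hv)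
  · simp only [ContinuousMultilinearMap.add_apply, Pi.add_apply, ← hT3 x, ← hU3 x]

lemma polySupNorm_nonneg (P : E → ℝ) : 0 ≤ polySupNorm P :=
  Real.sSup_nonneg (by rintro r ⟨x, -, rfl⟩; positivity)

lemma polyRegNorm_nonneg (P : E → ℝ) : 0 ≤ polyRegNorm n P :=
  Real.sInf_nonneg (by rintro r ⟨Q, -, -, -, rfl⟩; exact polySupNorm_nonneg Q)

lemma polyRegSet_bddBelow (P : E → ℝ) :
    BddBelow {r : ℝ | ∃ Q : E → ℝ, IsPosPoly n Q ∧ IsPosPoly n (Q - P) ∧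
      IsPosPoly n (Q + P) ∧ r = polySupNorm Q} :=
  ⟨0, by rintro r ⟨Q, -, -, -, rfl⟩; exact polySupNorm_nonneg Q⟩

lemma polySupNorm_mem_regSet {P : E → ℝ} (h : IsPosPoly n P) :
    polySupNorm P ∈ {r : ℝ | ∃ Q : E → ℝ, IsPosPoly n Q ∧ IsPosPoly n (Q - P) ∧
      IsPosPoly n (Q + P) ∧ r = polySupNorm Q} :=
  ⟨P, h, isPosPoly_zero.congr fun x => by simp, h.add h, rfl⟩

lemma IsPosPoly.eval_nonneg {P : E → ℝ} (h : IsPosPoly n P) {x : E} (hx : 0 ≤ x) :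
    0 ≤ P x := by
  obtain ⟨T, -, hTpos, hTd⟩ := h
  rw [hTd x]
  exact hTpos _ (fun _ => hx)

lemma eval_le_of_posPoly_sub {P Q : E → ℝ} (h : IsPosPoly n (Q - P)) {x : E} (hx : 0 ≤ x) :
    P x ≤ Q x := by
  have := h.eval_nonneg hx
  simp only [Pi.sub_apply, sub_nonneg] at this
  exact this

lemma norm_eval_le_polySupNorm (hn : 1 ≤ n) {P : E → ℝ}
    (T : ContinuousMultilinearMap ℝ (fun _ : Fin n => E) ℝ) (hd : ∀ x, P x = T (fun _ => x))
    (x : E) : ‖P x‖ ≤ polySupNorm P * ‖x‖ ^ n := by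
  have bdd : BddAbove {r : ℝ | ∃ y : E, ‖y‖ ≤ 1 ∧ r = ‖P y‖} := by
    refine ⟨‖T‖, ?_⟩
    rintro r ⟨y, hy, rfl⟩
    rw [hd y]
    calc ‖T (fun _ => y)‖ ≤ ‖T‖ * ∏ _i : Fin n, ‖y‖ := T.le_opNorm _
    _ ≤ ‖T‖ * 1 := mul_le_mul_of_nonneg_left
        (Finset.prod_le_one (fun _ _ => norm_nonneg y) (fun _ _ => hy)) (norm_nonneg T)
    _ = ‖T‖ := mul_one _
  have unit : ∀ y : E, ‖y‖ ≤ 1 → ‖P y‖ ≤ polySupNorm P := fun y hy =>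
    le_csSup bdd ⟨y, hy, rfl⟩
  rcases eq_or_ne x 0 with rfl | hx
  · have h0 : P 0 = 0 := by
      rw [hd 0]
      exact T.map_coord_zero ⟨0, hn⟩ rfl
    rw [h0, norm_zero, norm_zero, zero_pow (by omega : n ≠ 0), mul_zero]
  · have hc : (0:ℝ) < ‖x‖ := norm_pos_iff.2 hx
    set u : E := ‖x‖⁻¹ • x with hu
    have hu1 : ‖u‖ ≤ 1 := by
      rw [hu, norm_smul, norm_inv, norm_norm, inv_mul_cancel₀ hc.ne']
    have hscale : P x = ‖x‖ ^ n * P u := by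
      rw [hd, hd]
      have key := T.map_smul_univ (fun _ : Fin n => ‖x‖) (fun _ => u)
      rw [Finset.prod_const, Finset.card_univ, Fintype.card_fin, smul_eq_mul] at key
      rw [← key]
      congr 1
      funext i
      rw [hu, smul_inv_smul₀ hc.ne']
    rw [hscale, Real.norm_eq_abs, abs_mul, abs_of_nonneg (pow_nonneg hc.le n), mul_comm]
    refine mul_le_mul_of_nonneg_right ?_ (pow_nonneg hc.le n)
    rw [← Real.norm_eq_abs]
    exact unit u hu1

lemma polyRegNorm_le_polySupNorm {P : E → ℝ} (h : IsPosPoly n P) :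
    polyRegNorm n P ≤ polySupNorm P :=
  csInf_le (polyRegSet_bddBelow P) (polySupNorm_mem_regSet h)

lemma polyRegNorm_mono {P Q : E → ℝ} (hP : IsPosPoly n P) (hQ : IsPosPoly n Q)
    (hQP : IsPosPoly n (Q - P)) : polyRegNorm n P ≤ polyRegNorm n Q := by
  refine csInf_le_csInf (polyRegSet_bddBelow P)
    ⟨polySupNorm Q, polySupNorm_mem_regSet hQ⟩ ?_
  rintro r ⟨Q', h1, h2, h3, rfl⟩
  refine ⟨Q', h1, ?_, h1.add hP, rfl⟩
  exact (h2.add hQP).congr fun x => by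
    simp only [Pi.sub_apply, Pi.add_apply]; ring

lemma polyRegNorm_sub_comm (P Q : E → ℝ) :
    polyRegNorm n (P - Q) = polyRegNorm n (Q - P) := by
  have key : ∀ A B : E → ℝ, ∀ r : ℝ,
      (∃ Q' : E → ℝ, IsPosPoly n Q' ∧ IsPosPoly n (Q' - (A - B)) ∧
        IsPosPoly n (Q' + (A - B)) ∧ r = polySupNorm Q') →
      (∃ Q' : E → ℝ, IsPosPoly n Q' ∧ IsPosPoly n (Q' - (B - A)) ∧
        IsPosPoly n (Q' + (B - A)) ∧ r = polySupNorm Q') := by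
    rintro A B r ⟨Q', h1, h2, h3, rfl⟩
    exact ⟨Q', h1,
      h3.congr fun x => by simp only [Pi.add_apply, Pi.sub_apply]; ring,
      h2.congr fun x => by simp only [Pi.add_apply, Pi.sub_apply]; ring, rfl⟩
  unfold polyRegNorm
  congr 1
  ext r
  exact ⟨key P Q r, key Q P r⟩

lemma posPart_norm_le (a : E) : ‖a⁺‖ ≤ ‖a‖ := by
  apply norm_le_norm_of_abs_le_abs
  rw [abs_of_nonneg (posPart_nonneg a), posPart_def]
  exact sup_le (le_abs_self a) (abs_nonneg a)

lemma negPart_norm_le (a : E) : ‖a⁻‖ ≤ ‖a‖ := by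
  apply norm_le_norm_of_abs_le_abs
  rw [abs_of_nonneg (negPart_nonneg a), negPart_def]
  exact sup_le (neg_le_abs a) (abs_nonneg a)

end Aux

theorem statement17
    {E : Type*} [NormedAddCommGroup E] [Lattice E] [HasSolidNorm E] [IsOrderedAddMonoid E]
    [NormedSpace ℝ E] [CompleteSpace E]
    (n : ℕ) (hn : 1 ≤ n)
    -- P^r(^nE) has order continuous (regular) norm
    (hOC : ∀ S : Set (E → ℝ), (∀ P ∈ S, IsRegPoly n P) → S.Nonempty →
      DirectedOn (fun P R : E → ℝ => IsPosPoly n (P - R)) S →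
      (∀ P ∈ S, IsPosPoly n P) →
      (∀ R : E → ℝ, IsRegPoly n R → (∀ P ∈ S, IsPosPoly n (P - R)) → IsPosPoly n (-R)) →
      sInf ((fun P : E → ℝ => polyRegNorm n P) '' S) = 0)
    -- E fails the positive Grothendieck property
    (hE : ∃ f : ℕ → (E →L[ℝ] ℝ), (∀ k, ∀ x : E, 0 ≤ x → 0 ≤ f k x) ∧
      (∀ x : E, Tendsto (fun k => f k x) atTop (nhds 0)) ∧
      ∃ φ : (E →L[ℝ] ℝ) →L[ℝ] ℝ, ¬ Tendsto (fun k => φ (f k)) atTop (nhds 0)) :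
    -- (P^r(^nE), ‖·‖_r) is a KB-space
    ∀ f : ℕ → (E → ℝ), (∀ k, IsPosPoly n (f k)) →
      (∀ k, IsPosPoly n (f (k + 1) - f k)) →
      (∃ C : ℝ, ∀ k, polyRegNorm n (f k) ≤ C) →
      ∃ g : E → ℝ, IsRegPoly n g ∧
        Tendsto (fun k => polyRegNorm n (f k - g)) atTop (nhds 0) := by
  intro f hpos hmon hbdd
  classical
  obtain ⟨C, hC⟩ := hbdd
  have hpos' : ∀ k, ∃ T : ContinuousMultilinearMap ℝ (fun _ : Fin n => E) ℝ,
      (∀ (v : Fin n → E) (σ : Equiv.Perm (Fin n)), T (v ∘ σ) = T v) ∧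
      (∀ v : Fin n → E, (∀ i, 0 ≤ v i) → 0 ≤ T v) ∧
      ∀ x : E, f k x = T (fun _ => x) := hpos
  have hmon' : ∀ k, ∃ T : ContinuousMultilinearMap ℝ (fun _ : Fin n => E) ℝ,
      (∀ (v : Fin n → E) (σ : Equiv.Perm (Fin n)), T (v ∘ σ) = T v) ∧
      (∀ v : Fin n → E, (∀ i, 0 ≤ v i) → 0 ≤ T v) ∧
      ∀ x : E, (f (k+1) - f k) x = T (fun _ => x) := hmon
  choose A hA1 hA2 hA3 using hpos'
  choose D hD1 hD2 hD3 using hmon'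
  have hfpos : ∀ k, IsPosPoly n (f k) := fun k => ⟨A k, hA1 k, hA2 k, hA3 k⟩
  have hfmon : ∀ k, IsPosPoly n (f (k+1) - f k) := fun k => ⟨D k, hD1 k, hD2 k, hD3 k⟩
  set Tk : ℕ → ContinuousMultilinearMap ℝ (fun _ : Fin n => E) ℝ :=
    fun k => A 0 + ∑ j ∈ Finset.range k, D j with hTkdef
  have Tk_succ : ∀ k, Tk (k+1) = Tk k + D k := by
    intro k
    simp only [hTkdef, Finset.sum_range_succ, add_assoc]
  have Tk_apply : ∀ k (v : Fin n → E), Tk k v = A 0 v + ∑ j ∈ Finset.range k, D j v := by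
    intro k v
    simp only [hTkdef, ContinuousMultilinearMap.add_apply, ContinuousMultilinearMap.sum_apply]
  have Tk_sym : ∀ k (v : Fin n → E) (σ : Equiv.Perm (Fin n)), Tk k (v ∘ σ) = Tk k v := by
    intro k v σ
    rw [Tk_apply, Tk_apply, hA1 0 v σ]
    congr 1
    exact Finset.sum_congr rfl fun j _ => hD1 j v σ
  have Tk_pos : ∀ k (v : Fin n → E), (∀ i, 0 ≤ v i) → 0 ≤ Tk k v := by
    intro k v hv
    rw [Tk_apply]
    exact add_nonneg (hA2 0 v hv) (Finset.sum_nonneg fun j _ => hD2 j v hv)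
  have Tk_diag : ∀ k (x : E), Tk k (fun _ => x) = f k x := by
    intro k
    induction k with
    | zero =>
      intro x
      rw [Tk_apply]
      simp [← hA3 0 x]
    | succ k ih =>
      intro x
      have hd := hD3 k x
      simp only [Pi.sub_apply] at hd
      rw [Tk_succ k, ContinuousMultilinearMap.add_apply, ih x, ← hd]
      ring
  have Tk_mono : ∀ j k, j ≤ k → ∀ (v : Fin n → E), (∀ i, 0 ≤ v i) → Tk j v ≤ Tk k v := by
    intro j k hjk v hv
    induction k, hjk using Nat.le_induction with
    | base => exact le_refl _
    | succ k hjk ih =>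
      have h2 : Tk (k+1) v = Tk k v + D k v := by
        rw [Tk_succ k, ContinuousMultilinearMap.add_apply]
      have h3 := hD2 k v hv
      calc Tk j v ≤ Tk k v := ih
      _ ≤ Tk k v + D k v := by linarith
      _ = Tk (k+1) v := h2.symm
  set C1 : ℝ := C + 1 with hC1def
  have hC1 : ∀ k, polyRegNorm n (f k) < C1 := fun k => lt_of_le_of_lt (hC k) (lt_add_one C)
  have f_bound : ∀ k (x : E), 0 ≤ x → f k x ≤ C1 * ‖x‖ ^ n := by
    intro k x hx
    obtain ⟨r, hrmem, hrC⟩ := exists_lt_of_csInf_lt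
      ⟨polySupNorm (f k), polySupNorm_mem_regSet (hfpos k)⟩ (hC1 k)
    obtain ⟨Q, hQ1, hQ2, hQ3, rfl⟩ := hrmem
    obtain ⟨TQ, -, -, hTQd⟩ := hQ1
    calc f k x ≤ Q x := eval_le_of_posPoly_sub hQ2 hx
    _ ≤ ‖Q x‖ := (le_abs_self _).trans_eq (Real.norm_eq_abs _).symm
    _ ≤ polySupNorm Q * ‖x‖ ^ n := norm_eval_le_polySupNorm hn TQ hTQd x
    _ ≤ C1 * ‖x‖ ^ n := mul_le_mul_of_nonneg_right hrC.le (pow_nonneg (norm_nonneg x) n)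
  have pos_bound : ∀ k (v : Fin n → E), (∀ i, 0 ≤ v i) → Tk k v ≤ C1 * ‖∑ i, v i‖ ^ n := by
    intro k v hv
    have hsum0 : (0:E) ≤ ∑ i, v i := Finset.sum_nonneg fun i _ => hv i
    have hexp : f k (∑ i, v i) = ∑ r : Fin n → Fin n, Tk k (fun i => v (r i)) := by
      rw [← Tk_diag k]
      have := (Tk k).toMultilinearMap.map_sum (fun (_ : Fin n) (j : Fin n) => v j)
      simpa using this
    have hterm : Tk k v ≤ ∑ r : Fin n → Fin n, Tk k (fun i => v (r i)) := by
      have h := Finset.single_le_sum (f := fun r : Fin n → Fin n => Tk k (fun i => v (r i)))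
        (fun r _ => Tk_pos k _ (fun i => hv (r i))) (Finset.mem_univ id)
      simpa using h
    calc Tk k v ≤ f k (∑ i, v i) := hexp ▸ hterm
    _ ≤ C1 * ‖∑ i, v i‖ ^ n := f_bound k _ hsum0
  -- pointwise convergence of Tk
  have conv : ∀ v : Fin n → E, ∃ L, Tendsto (fun k => Tk k v) atTop (𝓝 L) := by
    have step : ∀ m : ℕ, ∀ v : Fin n → E, (∀ i : Fin n, m ≤ (i : ℕ) → 0 ≤ v i) →
        ∃ L, Tendsto (fun k => Tk k v) atTop (𝓝 L) := by
      intro m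
      induction m with
      | zero =>
        intro v hv
        have hv' : ∀ i, 0 ≤ v i := fun i => hv i (Nat.zero_le _)
        refine ⟨_, tendsto_atTop_ciSup (fun j k hjk => Tk_mono j k hjk v hv') ?_⟩
        exact ⟨C1 * ‖∑ i, v i‖ ^ n, by rintro r ⟨k, rfl⟩; exact pos_bound k v hv'⟩
      | succ m ih =>
        intro v hv
        by_cases hm : m < n
        · set i₀ : Fin n := ⟨m, hm⟩ with hi₀
          have hcond : ∀ a : E, 0 ≤ a → ∀ i : Fin n, m ≤ (i : ℕ) →
              0 ≤ Function.update v i₀ a i := by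
            intro a ha i hi
            rcases eq_or_ne i i₀ with rfl | hne
            · rw [Function.update_self]
              exact ha
            · rw [Function.update_of_ne hne]
              refine hv i ?_
              have hnm : (i : ℕ) ≠ m := fun h => hne (Fin.ext h)
              omega
          obtain ⟨L₁, hL₁⟩ := ih (Function.update v i₀ ((v i₀)⁺))
            (hcond _ (posPart_nonneg _))
          obtain ⟨L₂, hL₂⟩ := ih (Function.update v i₀ ((v i₀)⁻))
            (hcond _ (negPart_nonneg _))
          refine ⟨L₁ - L₂, (hL₁.sub hL₂).congr fun k => ?_⟩
          rw [← (Tk k).map_update_sub, posPart_sub_negPart, Function.update_eq_self]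
        · refine ih v fun i hi => ?_
          exact absurd (lt_of_lt_of_le i.isLt (not_lt.1 hm)) (not_lt.2 hi)
    exact fun v => step n v (fun i hi => absurd i.isLt (not_lt.2 hi))
  choose t ht using conv
  -- bounds on the limit
  set Bd : ℝ := (max C1 0) * (n:ℝ)^n with hBddef
  have bd_nonneg : 0 ≤ Bd := by positivity
  have unit_pos_bound : ∀ k (v : Fin n → E), (∀ i, 0 ≤ v i) → (∀ i, ‖v i‖ ≤ 1) →
      Tk k v ≤ Bd := by
    intro k v hv h1
    have hnorm : ‖∑ i, v i‖ ≤ (n:ℝ) := by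
      calc ‖∑ i, v i‖ ≤ ∑ i, ‖v i‖ := norm_sum_le _ _
      _ ≤ ∑ _i : Fin n, (1:ℝ) := Finset.sum_le_sum fun i _ => h1 i
      _ = (n:ℝ) := by simp
    calc Tk k v ≤ C1 * ‖∑ i, v i‖ ^ n := pos_bound k v hv
    _ ≤ (max C1 0) * (n:ℝ)^n := by
        refine mul_le_mul (le_max_left _ _)
          (pow_le_pow_left₀ (norm_nonneg _) hnorm n)
          (pow_nonneg (norm_nonneg _) n) (le_max_right _ _)
  have unit_bound : ∀ (m : ℕ) (k : ℕ) (v : Fin n → E), (∀ i, ‖v i‖ ≤ 1) →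
      (∀ i : Fin n, m ≤ (i : ℕ) → 0 ≤ v i) → |Tk k v| ≤ 2 ^ m * Bd := by
    intro m
    induction m with
    | zero =>
      intro k v h1 h2
      have hp : ∀ i, 0 ≤ v i := fun i => h2 i (Nat.zero_le _)
      rw [abs_of_nonneg (Tk_pos k v hp), pow_zero, one_mul]
      exact unit_pos_bound k v hp h1
    | succ m ih =>
      intro k v h1 h2
      by_cases hm : m < n
      · set i₀ : Fin n := ⟨m, hm⟩ with hi₀
        have hcond : ∀ a : E, 0 ≤ a → ∀ i : Fin n, m ≤ (i : ℕ) →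
            0 ≤ Function.update v i₀ a i := by
          intro a ha i hi
          rcases eq_or_ne i i₀ with rfl | hne
          · rw [Function.update_self]; exact ha
          · rw [Function.update_of_ne hne]
            refine h2 i ?_
            have hnm : (i : ℕ) ≠ m := fun h => hne (Fin.ext h)
            omega
        have hnorms : ∀ a : E, ‖a‖ ≤ ‖v i₀‖ → ∀ i : Fin n, ‖Function.update v i₀ a i‖ ≤ 1 := by
          intro a ha i
          rcases eq_or_ne i i₀ with rfl | hne
          · rw [Function.update_self]; exact ha.trans (h1 i₀)
          · rw [Function.update_of_ne hne]; exact h1 i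
        have e1 := ih k (Function.update v i₀ ((v i₀)⁺))
          (hnorms _ (posPart_norm_le _)) (hcond _ (posPart_nonneg _))
        have e2 := ih k (Function.update v i₀ ((v i₀)⁻))
          (hnorms _ (negPart_norm_le _)) (hcond _ (negPart_nonneg _))
        have hdec : Tk k v = Tk k (Function.update v i₀ ((v i₀)⁺))
            - Tk k (Function.update v i₀ ((v i₀)⁻)) := by
          rw [← (Tk k).map_update_sub, posPart_sub_negPart, Function.update_eq_self]
        rw [hdec]
        calc |Tk k (Function.update v i₀ ((v i₀)⁺)) - Tk k (Function.update v i₀ ((v i₀)⁻))|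
            ≤ |Tk k (Function.update v i₀ ((v i₀)⁺))| + |Tk k (Function.update v i₀ ((v i₀)⁻))| :=
              abs_sub _ _
        _ ≤ 2^m * Bd + 2^m * Bd := add_le_add e1 e2
        _ = 2^(m+1) * Bd := by ring
      · have e := ih k v h1 fun i hi =>
          absurd (lt_of_lt_of_le i.isLt (not_lt.1 hm)) (not_lt.2 hi)
        refine e.trans ?_
        have h2m : (2:ℝ)^m ≤ 2^(m+1) := by
          refine pow_le_pow_right₀ (by norm_num) (by omega)
        nlinarith
  set M : ℝ := 2 ^ n * Bd with hMdef
  have M_nonneg : 0 ≤ M := by positivity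
  have t_unit : ∀ v : Fin n → E, (∀ i, ‖v i‖ ≤ 1) → |t v| ≤ M := by
    intro v h1
    refine le_of_tendsto (ht v).abs (Filter.Eventually.of_forall fun k => ?_)
    exact unit_bound n k v h1 fun i hi => absurd i.isLt (not_lt.2 hi)
  have t_sym : ∀ (v : Fin n → E) (σ : Equiv.Perm (Fin n)), t (v ∘ σ) = t v := fun v σ =>
    tendsto_nhds_unique (ht (v ∘ σ)) (Tendsto.congr (fun k => (Tk_sym k v σ).symm) (ht v))
  have t_pos : ∀ v : Fin n → E, (∀ i, 0 ≤ v i) → 0 ≤ t v := fun v hv =>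
    ge_of_tendsto (ht v) (Filter.Eventually.of_forall fun k => Tk_pos k v hv)
  have t_ge : ∀ k (v : Fin n → E), (∀ i, 0 ≤ v i) → Tk k v ≤ t v := fun k v hv =>
    ge_of_tendsto (ht v) (Filter.eventually_atTop.2 ⟨k, fun m hm => Tk_mono k m hm v hv⟩)
  -- the limit multilinear map
  set tM : MultilinearMap ℝ (fun _ : Fin n => E) ℝ :=
    { toFun := t
      map_update_add' := by
        intro inst v i x y
        refine tendsto_nhds_unique (ht _) ?_
        have h2 := (ht (Function.update v i x)).add (ht (Function.update v i y))
        exact Tendsto.congr (fun k => ((Tk k).map_update_add v i x y).symm) h2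
      map_update_smul' := by
        intro inst v i c x
        refine tendsto_nhds_unique (ht _) ?_
        have h2 := (ht (Function.update v i x)).const_mul c
        refine Tendsto.congr (fun k => ((Tk k).map_update_smul v i c x).symm) ?_
        simpa [smul_eq_mul] using h2 } with htMdef
  have tM_apply : ∀ v, tM v = t v := fun v => rfl
  have tM_bound : ∀ v : Fin n → E, ‖tM v‖ ≤ M * ∏ i, ‖v i‖ := by
    intro v
    by_cases hz : ∀ i, v i ≠ 0
    · have hprod_pos : 0 < ∏ i, ‖v i‖ :=
        Finset.prod_pos fun i _ => norm_pos_iff.2 (hz i)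
      have key := tM.map_smul_univ (fun i => ‖v i‖) (fun i => ‖v i‖⁻¹ • v i)
      have hvv : (fun i => ‖v i‖ • (‖v i‖⁻¹ • v i)) = v :=
        funext fun i => smul_inv_smul₀ (norm_ne_zero_iff.2 (hz i)) _
      rw [hvv] at key
      rw [key, smul_eq_mul, Real.norm_eq_abs, abs_mul,
        abs_of_nonneg hprod_pos.le, mul_comm M _]
      refine mul_le_mul_of_nonneg_left ?_ hprod_pos.le
      rw [← Real.norm_eq_abs, Real.norm_eq_abs]
      refine t_unit _ fun i => ?_
      rw [norm_smul, norm_inv, norm_norm, inv_mul_cancel₀ (norm_ne_zero_iff.2 (hz i))]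
    · push_neg at hz
      obtain ⟨i, hi⟩ := hz
      have h0 : tM v = 0 := tM.map_coord_zero i hi
      rw [h0, norm_zero]
      positivity
  set T : ContinuousMultilinearMap ℝ (fun _ : Fin n => E) ℝ :=
    tM.mkContinuous M tM_bound with hTdef
  have T_apply : ∀ v, T v = t v := fun v => rfl
  set g : E → ℝ := fun x => t (fun _ => x) with hgdef
  have g_pos : IsPosPoly n g :=
    ⟨T, fun v σ => by rw [T_apply, T_apply]; exact t_sym v σ,
      fun v hv => by rw [T_apply]; exact t_pos v hv, fun x => rfl⟩
  have gsub_pos : ∀ k, IsPosPoly n (g - f k) := by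
    intro k
    refine ⟨T - Tk k, fun v σ => ?_, fun v hv => ?_, fun x => ?_⟩
    · simp only [ContinuousMultilinearMap.sub_apply, T_apply, t_sym v σ, Tk_sym k v σ]
    · simp only [ContinuousMultilinearMap.sub_apply, T_apply, sub_nonneg]
      exact t_ge k v hv
    · simp only [ContinuousMultilinearMap.sub_apply, T_apply, Pi.sub_apply, Tk_diag k x]; rfl
  have f_sub_pos : ∀ j k, j ≤ k → IsPosPoly n (f k - f j) := by
    intro j k hjk
    induction k, hjk using Nat.le_induction with
    | base => exact isPosPoly_zero.congr fun x => by simp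
    | succ k hjk ih =>
      exact ((hfmon k).add ih).congr fun x => by
        simp only [Pi.add_apply, Pi.sub_apply]; ring
  -- apply order continuity
  have hS : sInf ((fun P : E → ℝ => polyRegNorm n P) '' Set.range fun k => g - f k) = 0 := by
    refine hOC _ ?_ ⟨g - f 0, ⟨0, rfl⟩⟩ ?_ ?_ ?_
    · rintro P ⟨k, rfl⟩
      exact ⟨g - f k, 0, gsub_pos k, isPosPoly_zero, (sub_zero _).symm⟩
    · rintro P ⟨j, rfl⟩ Q' ⟨k, rfl⟩
      refine ⟨g - f (max j k), ⟨max j k, rfl⟩, ?_, ?_⟩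
      · exact (f_sub_pos j (max j k) (le_max_left _ _)).congr fun x => by
          simp only [Pi.sub_apply]; ring
      · exact (f_sub_pos k (max j k) (le_max_right _ _)).congr fun x => by
          simp only [Pi.sub_apply]; ring
    · rintro P ⟨k, rfl⟩
      exact gsub_pos k
    · intro R hReg hRub
      obtain ⟨R₁, R₂, ⟨S₁, hS11, hS12, hS13⟩, ⟨S₂, hS21, hS22, hS23⟩, hR⟩ := hReg
      refine ⟨S₂ - S₁, fun v σ => ?_, fun v hv => ?_, fun x => ?_⟩
      · simp only [ContinuousMultilinearMap.sub_apply, hS21 v σ, hS11 v σ]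
      · simp only [ContinuousMultilinearMap.sub_apply, sub_nonneg]
        have key : ∀ k, S₁ v - S₂ v ≤ t v - Tk k v := by
          intro k
          obtain ⟨U, hU1, hU2, hU3⟩ := hRub (g - f k) ⟨k, rfl⟩
          have hdiag : ∀ x : E, ((T - Tk k) - (S₁ - S₂)) (fun _ => x) = U (fun _ => x) := by
            intro x
            have h1 := hU3 x
            simp only [Pi.sub_apply, hR] at h1
            simp only [ContinuousMultilinearMap.sub_apply, T_apply, Tk_diag k x,
              ← hS13 x, ← hS23 x]
            rw [← h1]
          have hsymL : ∀ (w : Fin n → E) (σ : Equiv.Perm (Fin n)),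
              ((T - Tk k) - (S₁ - S₂)) (w ∘ σ) = ((T - Tk k) - (S₁ - S₂)) w := by
            intro w σ
            simp only [ContinuousMultilinearMap.sub_apply, T_apply, t_sym w σ,
              Tk_sym k w σ, hS11 w σ, hS21 w σ]
          have heq := symm_diag_eq hsymL hU1 hdiag v
          have hU := hU2 v hv
          simp only [ContinuousMultilinearMap.sub_apply, T_apply] at heq
          linarith
        have lim0 : Tendsto (fun k => t v - Tk k v) atTop (𝓝 0) := by
          have h := (tendsto_const_nhds (x := t v) (f := atTop)).sub (ht v)
          simpa using h
        have hle : S₁ v - S₂ v ≤ 0 :=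
          ge_of_tendsto lim0 (Filter.Eventually.of_forall key)
        linarith
      · simp only [ContinuousMultilinearMap.sub_apply, Pi.neg_apply, hR, Pi.sub_apply,
          ← hS13 x, ← hS23 x]
        ring
  -- conclude
  set a : ℕ → ℝ := fun k => polyRegNorm n (g - f k) with hadef
  have a_anti : Antitone a := by
    refine antitone_nat_of_succ_le fun k => ?_
    refine polyRegNorm_mono (gsub_pos (k+1)) (gsub_pos k) ?_
    exact (hfmon k).congr fun x => by simp only [Pi.sub_apply]; ring
  have a_bdd : BddBelow (Set.range a) :=
    ⟨0, by rintro r ⟨k, rfl⟩; exact polyRegNorm_nonneg _⟩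
  have a_tend : Tendsto a atTop (𝓝 (⨅ k, a k)) := tendsto_atTop_ciInf a_anti a_bdd
  have hinf : (⨅ k, a k) = 0 := by
    have hr : Set.range a
        = (fun P : E → ℝ => polyRegNorm n P) '' Set.range (fun k => g - f k) := by
      rw [← Set.range_comp]
      rfl
    rw [show (⨅ k, a k) = sInf (Set.range a) from rfl, hr, hS]
  rw [hinf] at a_tend
  refine ⟨g, ⟨g, 0, g_pos, isPosPoly_zero, (sub_zero g).symm⟩, ?_⟩
  have hfun : (fun k => polyRegNorm n (f k - g)) = a :=
    funext fun k => polyRegNorm_sub_comm (f k) g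
  rw [hfun]
  exact a_tend
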